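/- arXiv:1910.12490 — 5 statements merged into one kernel-verified Lean document; each statement's English description precedes it below -/
import Mathlib

section
/- Let A and B be n×k matrices with entries in {0,1} (viewed as integers). Suppose every one of the k standard basis vectors e_1, …, e_k of length k occurs as a row of A. If A·Aᵀ = B·Bᵀ, then there exists a k×k permutation matrix P such that B = A·P. -/
open Matrix Finset

/-- deterministic core of Lemma 2 (i.i.d.-ensemble uniqueness of the
factorization `A * Aᵀ`). -/
theorem stmt_1 (n k : ℕ)
    (A B : Matrix (Fin n) (Fin k) ℤ)
    (hA01 : ∀ i j, A i j = 0 ∨ A i j = 1)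
    (hB01 : ∀ i j, B i j = 0 ∨ B i j = 1)
    (hbasis : ∀ j : Fin k, ∃ i : Fin n, A i = fun j' => if j' = j then 1 else 0)
    (hGram : A * Aᵀ = B * Bᵀ) :
    ∃ σ : Equiv.Perm (Fin k),
      B = A * Matrix.of (fun i j => if σ i = j then (1 : ℤ) else 0) := by
  classical
  choose r hr using hbasis
  have hGram' : ∀ i i', ∑ m, A i m * A i' m = ∑ m, B i m * B i' m := by
    intro i i'
    have h := congrFun (congrFun hGram i) i'
    simpa [Matrix.mul_apply, Matrix.transpose_apply] using h
  have hAkey : ∀ i j, ∑ m, A i m * A (r j) m = A i j := by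
    intro i j
    rw [hr j]
    simp
  have hsum1 : ∀ j, ∑ m, B (r j) m * B (r j) m = 1 := by
    intro j
    rw [← hGram', hAkey, hr j]
    simp
  have hnonneg : ∀ j m, (0 : ℤ) ≤ B (r j) m * B (r j) m := fun j m => mul_self_nonneg _
  have hexists : ∀ j, ∃ m, B (r j) m = 1 := by
    intro j
    by_contra h
    push_neg at h
    have hz : ∀ m, B (r j) m = 0 := fun m => (hB01 (r j) m).resolve_right (h m)
    have h1 := hsum1 j
    simp [hz] at h1
  choose τ hτ using hexists
  have huniq : ∀ j m, m ≠ τ j → B (r j) m = 0 := by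
    intro j m hm
    by_contra h0
    have h1 : B (r j) m = 1 := (hB01 (r j) m).resolve_left h0
    have hsub : ({m, τ j} : Finset (Fin k)) ⊆ Finset.univ := Finset.subset_univ _
    have hle : ∑ x ∈ ({m, τ j} : Finset (Fin k)), B (r j) x * B (r j) x ≤
        ∑ x, B (r j) x * B (r j) x :=
      Finset.sum_le_sum_of_subset_of_nonneg hsub (fun x _ _ => hnonneg j x)
    rw [Finset.sum_pair hm, h1, hτ j, hsum1 j] at hle
    norm_num at hle
  have hBrow : ∀ j, B (r j) = fun m => if m = τ j then 1 else 0 := by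
    intro j
    funext m
    by_cases hm : m = τ j
    · simp [hm, hτ j]
    · simp [hm, huniq j m hm]
  have hBkey : ∀ i j, ∑ m, B i m * B (r j) m = B i (τ j) := by
    intro i j
    rw [hBrow j]
    simp
  have hAB : ∀ i j, A i j = B i (τ j) := by
    intro i j
    rw [← hAkey i j, hGram', hBkey]
  have hinj : Function.Injective τ := by
    intro j j' hjj
    by_contra hne
    have h1 : A (r j') j = B (r j') (τ j) := hAB (r j') j
    rw [hjj, ← hAB (r j') j'] at h1
    rw [hr j'] at h1
    simp [hne, Ne.symm hne] at h1
  have hbij : Function.Bijective τ := Finite.injective_iff_bijective.mp hinj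
  refine ⟨Equiv.ofBijective τ hbij, ?_⟩
  ext i j'
  set σ := Equiv.ofBijective τ hbij with hσ
  have : (A * Matrix.of (fun i j => if σ i = j then (1 : ℤ) else 0)) i j' =
      A i (σ.symm j') := by
    rw [Matrix.mul_apply]
    have hiff : ∀ m : Fin k, (σ m = j') ↔ (m = σ.symm j') := by
      intro m; exact ⟨fun h => h ▸ (σ.symm_apply_apply m).symm, fun h => h ▸ σ.apply_symm_apply j'⟩
    simp only [Matrix.of_apply, hiff]
    simp
  rw [this, hAB i (σ.symm j')]
  have : τ (σ.symm j') = σ (σ.symm j') := rfl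
  rw [this, Equiv.apply_symm_apply]
end

section
/- Let 0 < p < 1, let α = max(p, 1−p), and let m ≥ k ≥ 1. Let B be a random m×k matrix over the field GF(2) whose entries are independent, each equal to 1 with probability p. Then the probability that B has rank k over GF(2) is at least the product over ℓ from m−k+1 to m of (1 − α^ℓ). -/
open Finset Matrix
open scoped Classical

namespace Stmt7

noncomputable def w (p : ℝ) (x : ZMod 2) : ℝ := if x = 1 then p else 1 - p

lemma w_nonneg {p : ℝ} (hp0 : 0 < p) (hp1 : p < 1) (x : ZMod 2) : 0 ≤ w p x := by
  unfold w; split <;> linarith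

lemma w_le_alpha {p : ℝ} (x : ZMod 2) : w p x ≤ max p (1 - p) := by
  unfold w; split
  · exact le_max_left _ _
  · exact le_max_right _ _

lemma sum_w (p : ℝ) : ∑ x : ZMod 2, w p x = 1 := by
  have : ∑ x : ZMod 2, w p x = w p 0 + w p 1 := Fin.sum_univ_two (w p)
  rw [this]
  have h0 : (0 : ZMod 2) ≠ 1 := by decide
  simp [w, h0]

lemma sum_mu (p : ℝ) (m : ℕ) : ∑ v : Fin m → ZMod 2, ∏ i, w p (v i) = 1 := by
  rw [← Fintype.piFinset_univ, ← Finset.prod_univ_sum]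
  simp [sum_w]



lemma zmod2_ne_zero (x : ZMod 2) (h : x ≠ 0) : x = 1 := by
  revert h; revert x; decide

lemma exists_coords (m : ℕ) (W : Submodule (ZMod 2) (Fin m → ZMod 2)) :
    ∃ S : Finset (Fin m), S.card ≤ Module.finrank (ZMod 2) W ∧
      ∀ v ∈ W, (∀ i ∈ S, v i = 0) → v = 0 := by
  set d := Module.finrank (ZMod 2) W with hd
  suffices h : ∀ n (T : Finset (Fin m)), T.card = n →
      (∀ v ∈ W, (∀ i ∈ T, v i = 0) → v = 0) →
      ∃ S : Finset (Fin m), S.card ≤ d ∧ ∀ v ∈ W, (∀ i ∈ S, v i = 0) → v = 0 by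
    exact h _ Finset.univ rfl (fun v _ h0 => funext fun i => h0 i (mem_univ i))
  intro n
  induction n using Nat.strong_induction_on with
  | _ n ih =>
    intro T hTcard hT
    by_cases hle : T.card ≤ d
    · exact ⟨T, hle, hT⟩
    · push_neg at hle
      by_cases hex : ∃ i ∈ T, ∀ v ∈ W, (∀ j ∈ T.erase i, v j = 0) → v = 0
      · obtain ⟨i, hi, hgood⟩ := hex
        refine ih (T.erase i).card ?_ _ rfl hgood
        rw [Finset.card_erase_of_mem hi, hTcard]
        have : 1 ≤ n := by
          rw [← hTcard]
          have : i ∈ T := hi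
          exact Finset.card_pos.mpr ⟨i, hi⟩
        omega
      · exfalso
        push_neg at hex
        -- for each i ∈ T get a bad vector
        have hbad : ∀ i ∈ T, ∃ v, v ∈ W ∧ (∀ j ∈ T.erase i, v j = 0) ∧ v ≠ 0 := by
          intro i hi
          obtain ⟨v, hvW, hv0, hvne⟩ := hex i hi
          exact ⟨v, hvW, hv0, hvne⟩
        choose v hvW hv0 hvne using hbad
        -- v i i = 1
        have hvi : ∀ i (hi : i ∈ T), v i hi i = 1 := by
          intro i hi
          apply zmod2_ne_zero
          intro h0
          apply hvne i hi
          apply hT _ (hvW i hi)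
          intro j hj
          by_cases hji : j = i
          · rw [hji, h0]
          · exact hv0 i hi j (Finset.mem_erase.mpr ⟨hji, hj⟩)
        -- family in W is linearly independent
        have hli : LinearIndependent (ZMod 2)
            (fun i : {x // x ∈ T} => (⟨v i.1 i.2, hvW i.1 i.2⟩ : W)) := by
          rw [Fintype.linearIndependent_iff]
          intro g hg j
          have := congrArg (Submodule.subtype W) hg
          rw [map_sum] at this
          have h2 := congrFun this (j : Fin m)
          simp only [Submodule.coe_subtype, Submodule.coe_smul, _root_.map_smul] at h2
          have h3 : ∑ i : {x // x ∈ T}, g i • v i.1 i.2 (j : Fin m) = 0 := by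
            have := congrFun (congrArg Subtype.val (show ∑ i : {x // x ∈ T},
                g i • (⟨v i.1 i.2, hvW i.1 i.2⟩ : W) = 0 from hg)) (j : Fin m)
            simpa using this
          rw [Finset.sum_eq_single j] at h3
          · rw [hvi j.1 j.2] at h3
            simpa using h3
          · intro b _ hbj
            have : v b.1 b.2 (j : Fin m) = 0 := by
              apply hv0 b.1 b.2
              refine Finset.mem_erase.mpr ⟨?_, j.2⟩
              exact fun h => hbj (Subtype.ext h.symm) |>.elim
            rw [this, smul_zero]
          · intro hj'; exact absurd (Finset.mem_univ j) hj'
        have hcard : Fintype.card {x // x ∈ T} ≤ d := by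
          rw [hd]
          exact hli.fintype_card_le_finrank
        rw [Fintype.card_coe] at hcard
        omega


lemma alpha_nonneg {p : ℝ} (hp0 : 0 < p) (hp1 : p < 1) : 0 ≤ max p (1 - p) :=
  le_trans hp0.le (le_max_left _ _)

lemma alpha_le_one {p : ℝ} (hp0 : 0 < p) (hp1 : p < 1) : max p (1 - p) ≤ 1 :=
  max_le hp1.le (by linarith)

lemma sum_mem_le (m : ℕ) {p : ℝ} (hp0 : 0 < p) (hp1 : p < 1)
    (W : Submodule (ZMod 2) (Fin m → ZMod 2)) :
    ∑ v : Fin m → ZMod 2, (if v ∈ W then ∏ i, w p (v i) else 0)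
      ≤ (max p (1 - p)) ^ (m - Module.finrank (ZMod 2) W) := by
  set α := max p (1 - p) with hα
  have hα0 : 0 ≤ α := alpha_nonneg hp0 hp1
  have hα1 : α ≤ 1 := alpha_le_one hp0 hp1
  set d := Module.finrank (ZMod 2) W with hd
  obtain ⟨S, hScard, hS⟩ := exists_coords m W
  -- auxiliary weight function
  set f : Fin m → ZMod 2 → ℝ := fun i x => if i ∈ S then w p x else (if x = 0 then 1 else 0)
    with hf
  have hfnn : ∀ i x, 0 ≤ f i x := by
    intro i x
    simp only [hf]
    split
    · exact w_nonneg hp0 hp1 x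
    · split <;> norm_num
  set F : (Fin m → ZMod 2) → ℝ := fun y => ∏ i, f i (y i) with hF
  have hFnn : ∀ y, 0 ≤ F y := fun y => Finset.prod_nonneg fun i _ => hfnn i (y i)
  have hFsum : ∑ y : Fin m → ZMod 2, F y = 1 := by
    rw [hF, ← Fintype.piFinset_univ, ← Finset.prod_univ_sum]
    have : ∀ i : Fin m, ∑ x : ZMod 2, f i x = 1 := by
      intro i
      simp only [hf]
      by_cases hi : i ∈ S
      · simp only [if_pos hi]; exact sum_w p
      · simp only [if_neg hi]
        have : ∑ x : ZMod 2, (if x = 0 then (1:ℝ) else 0) =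
            (if (0:ZMod 2) = 0 then (1:ℝ) else 0) + (if (1:ZMod 2) = 0 then (1:ℝ) else 0) :=
          Fin.sum_univ_two _
        rw [this, if_pos rfl, if_neg (by decide)]
        norm_num
    simp [this]
  -- the restriction map
  set h : (Fin m → ZMod 2) → (Fin m → ZMod 2) := fun v i => if i ∈ S then v i else 0 with hh
  have hinj : Set.InjOn h {v | v ∈ W} := by
    intro u hu u' hu' huu
    have hsub : u - u' ∈ W := W.sub_mem hu hu'
    have : u - u' = 0 := by
      apply hS _ hsub
      intro i hi
      have := congrFun huu i
      simp only [hh, if_pos hi] at this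
      simp [this]
    exact sub_eq_zero.mp this
  -- termwise bound: for v ∈ W, μ v ≤ α^(m-d) * F (h v)
  have hterm : ∀ v : Fin m → ZMod 2, v ∈ W → ∏ i, w p (v i) ≤ α ^ (m - d) * F (h v) := by
    intro v hv
    have hFh : F (h v) = ∏ i ∈ S, w p (v i) := by
      show (∏ i, f i (h v i)) = ∏ i ∈ S, w p (v i)
      rw [← Finset.prod_filter_mul_prod_filter_not Finset.univ (· ∈ S)]
      have h1 : ∀ i ∈ Finset.univ.filter (· ∈ S), f i (h v i) = w p (v i) := by
        intro i hi
        rcases Finset.mem_filter.mp hi with ⟨_, hiS⟩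
        simp [hf, hh, hiS]
      have h2 : ∀ i ∈ Finset.univ.filter (¬ · ∈ S), f i (h v i) = 1 := by
        intro i hi
        rcases Finset.mem_filter.mp hi with ⟨_, hiS⟩
        simp [hf, hh, hiS]
      rw [Finset.prod_congr rfl h1, Finset.prod_congr rfl h2, Finset.prod_const_one, mul_one]
      rw [Finset.filter_univ_mem]
    rw [hFh]
    rw [← Finset.prod_mul_prod_compl S (fun i => w p (v i))]
    rw [mul_comm]
    apply mul_le_mul_of_nonneg_right _ (Finset.prod_nonneg fun i _ => w_nonneg hp0 hp1 _)
    calc ∏ i ∈ Sᶜ, w p (v i) ≤ ∏ i ∈ Sᶜ, α :=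
          Finset.prod_le_prod (fun i _ => w_nonneg hp0 hp1 _) (fun i _ => w_le_alpha _)
      _ = α ^ (Sᶜ.card) := Finset.prod_const α
      _ ≤ α ^ (m - d) := by
          apply pow_le_pow_of_le_one hα0 hα1
          rw [Finset.card_compl, Fintype.card_fin]
          omega
  calc ∑ v : Fin m → ZMod 2, (if v ∈ W then ∏ i, w p (v i) else 0)
      ≤ ∑ v : Fin m → ZMod 2, (if v ∈ W then α ^ (m - d) * F (h v) else 0) := by
        apply Finset.sum_le_sum
        intro v _
        split
        · exact hterm v ‹_›
        · exact le_refl 0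
    _ = ∑ v : Fin m → ZMod 2, α ^ (m - d) * (if v ∈ W then F (h v) else 0) := by
        apply Finset.sum_congr rfl
        intro v _
        split <;> simp
    _ = α ^ (m - d) * ∑ v ∈ Finset.univ.filter (· ∈ W), F (h v) := by
        rw [← Finset.mul_sum, Finset.sum_filter]
    _ = α ^ (m - d) * ∑ y ∈ (Finset.univ.filter (· ∈ W)).image h, F y := by
        rw [Finset.sum_image]
        intro u hu u' hu' huu
        exact hinj (by simpa using Finset.mem_filter.mp hu |>.2)
          (by simpa using Finset.mem_filter.mp hu' |>.2) huu
    _ ≤ α ^ (m - d) * ∑ y : Fin m → ZMod 2, F y := by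
        apply mul_le_mul_of_nonneg_left _ (pow_nonneg hα0 _)
        apply Finset.sum_le_sum_of_subset_of_nonneg (Finset.subset_univ _)
        intro y _ _; exact hFnn y
    _ = α ^ (m - d) := by rw [hFsum, mul_one]


noncomputable def Q (p : ℝ) (m n : ℕ) : ℝ :=
  ∑ c : Fin n → (Fin m → ZMod 2),
    if LinearIndependent (ZMod 2) c then ∏ j, ∏ i, w p (c j i) else 0

lemma Q_zero (p : ℝ) (m : ℕ) : Q p m 0 = 1 := by
  rw [Q]
  have h1 : ∀ c : Fin 0 → (Fin m → ZMod 2),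
      (if LinearIndependent (ZMod 2) c then ∏ j, ∏ i, w p (c j i) else 0) = 1 := by
    intro c
    rw [if_pos linearIndependent_empty_type]
    simp
  rw [Finset.sum_congr rfl (fun c _ => h1 c), Finset.sum_const]
  simp

lemma Q_succ (p : ℝ) (hp0 : 0 < p) (hp1 : p < 1) (m n : ℕ) :
    Q p m (n + 1) ≥ Q p m n * (1 - (max p (1 - p)) ^ (m - n)) := by
  set α := max p (1 - p) with hα
  have hα0 : 0 ≤ α := alpha_nonneg hp0 hp1
  have hα1 : α ≤ 1 := alpha_le_one hp0 hp1
  have hc : 0 ≤ 1 - α ^ (m - n) := by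
    have := pow_le_one₀ hα0 hα1 (n := m - n)
    linarith
  -- reindex the (n+1)-fold sum
  have hre : Q p m (n + 1) =
      ∑ z : (Fin m → ZMod 2) × (Fin n → (Fin m → ZMod 2)),
        if LinearIndependent (ZMod 2) (Fin.cons z.1 z.2 : Fin (n+1) → (Fin m → ZMod 2)) then
          ∏ j, ∏ i, w p ((Fin.cons z.1 z.2 : Fin (n+1) → (Fin m → ZMod 2)) j i)
        else 0 := by
    rw [Q]
    rw [← Equiv.sum_comp (show (Fin m → ZMod 2) × (Fin n → Fin m → ZMod 2) ≃
        (Fin (n+1) → Fin m → ZMod 2) from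
      ⟨fun z => Fin.cons z.1 z.2, fun c => (c 0, Fin.tail c),
        fun z => by simp, fun c => Fin.cons_self_tail c⟩)]
    apply Finset.sum_congr rfl
    intro z _
    rfl
  rw [hre, Fintype.sum_prod_type_right]
  -- now bound each inner sum
  have key : ∀ c : Fin n → (Fin m → ZMod 2),
      (∑ x : Fin m → ZMod 2,
        if LinearIndependent (ZMod 2) (Fin.cons x c : Fin (n+1) → (Fin m → ZMod 2)) then
          ∏ j, ∏ i, w p ((Fin.cons x c : Fin (n+1) → (Fin m → ZMod 2)) j i)
        else 0)
      ≥ (if LinearIndependent (ZMod 2) c then ∏ j, ∏ i, w p (c j i) else 0)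
          * (1 - α ^ (m - n)) := by
    intro c
    by_cases hLI : LinearIndependent (ZMod 2) c
    · rw [if_pos hLI]
      set W := Submodule.span (ZMod 2) (Set.range c) with hW
      have hrank : Module.finrank (ZMod 2) W = n := by
        rw [hW, finrank_span_eq_card hLI, Fintype.card_fin]
      have hstep : ∀ x : Fin m → ZMod 2,
          (if LinearIndependent (ZMod 2) (Fin.cons x c : Fin (n+1) → (Fin m → ZMod 2)) then
            ∏ j, ∏ i, w p ((Fin.cons x c : Fin (n+1) → (Fin m → ZMod 2)) j i)
          else 0)
          = (if x ∉ W then (∏ i, w p (x i)) * ∏ j, ∏ i, w p (c j i) else 0) := by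
        intro x
        have hiff : LinearIndependent (ZMod 2) (Fin.cons x c : Fin (n+1) → (Fin m → ZMod 2))
            ↔ x ∉ W := by
          rw [linearIndependent_fin_cons]
          exact ⟨fun h => h.2, fun h => ⟨hLI, h⟩⟩
        by_cases hx : x ∉ W
        · rw [if_pos (hiff.mpr hx), if_pos hx, Fin.prod_univ_succ]
          simp [Fin.cons_succ, Fin.cons_zero]
        · rw [if_neg (by rw [hiff]; exact hx), if_neg hx]
      rw [Finset.sum_congr rfl (fun x _ => hstep x)]
      have hsplit : ∑ x : Fin m → ZMod 2,
          (if x ∉ W then (∏ i, w p (x i)) * ∏ j, ∏ i, w p (c j i) else 0)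
          = (1 - ∑ x : Fin m → ZMod 2, (if x ∈ W then ∏ i, w p (x i) else 0))
             * ∏ j, ∏ i, w p (c j i) := by
        have hterm : ∀ x : Fin m → ZMod 2,
            (if x ∉ W then (∏ i, w p (x i)) * ∏ j, ∏ i, w p (c j i) else 0)
            = (∏ i, w p (x i)) * (∏ j, ∏ i, w p (c j i))
              - (if x ∈ W then ∏ i, w p (x i) else 0) * (∏ j, ∏ i, w p (c j i)) := by
          intro x
          by_cases hx : x ∈ W <;> simp [hx]
        rw [Finset.sum_congr rfl (fun x _ => hterm x), Finset.sum_sub_distrib,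
          ← Finset.sum_mul, ← Finset.sum_mul, sum_mu]
        ring
      rw [hsplit, mul_comm]
      have hPnn : (0:ℝ) ≤ ∏ j, ∏ i, w p (c j i) :=
        Finset.prod_nonneg fun j _ => Finset.prod_nonneg fun i _ => w_nonneg hp0 hp1 _
      apply mul_le_mul_of_nonneg_left _ hPnn
      have hle := sum_mem_le m hp0 hp1 W
      rw [hrank] at hle
      linarith
    · rw [if_neg hLI, zero_mul]
      apply Finset.sum_nonneg
      intro x _
      split
      · exact Finset.prod_nonneg fun j _ => Finset.prod_nonneg fun i _ => w_nonneg hp0 hp1 _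
      · exact le_refl 0
  calc ∑ c : Fin n → (Fin m → ZMod 2), (∑ x : Fin m → ZMod 2,
        if LinearIndependent (ZMod 2) (Fin.cons x c : Fin (n+1) → (Fin m → ZMod 2)) then
          ∏ j, ∏ i, w p ((Fin.cons x c : Fin (n+1) → (Fin m → ZMod 2)) j i)
        else 0)
      ≥ ∑ c : Fin n → (Fin m → ZMod 2),
          (if LinearIndependent (ZMod 2) c then ∏ j, ∏ i, w p (c j i) else 0)
            * (1 - α ^ (m - n)) := Finset.sum_le_sum (fun c _ => key c)
    _ = Q p m n * (1 - α ^ (m - n)) := by rw [← Finset.sum_mul, Q]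


lemma Q_ge (p : ℝ) (hp0 : 0 < p) (hp1 : p < 1) (m : ℕ) :
    ∀ n, n ≤ m → Q p m n ≥ ∏ ℓ ∈ Finset.Icc (m - n + 1) m, (1 - (max p (1 - p)) ^ ℓ) := by
  intro n
  induction n with
  | zero =>
    intro _
    rw [Q_zero, Finset.Icc_eq_empty (by omega), Finset.prod_empty]
  | succ n ih =>
    intro hnm
    have hn : n ≤ m := Nat.le_of_succ_le hnm
    have hα0 : 0 ≤ max p (1 - p) := alpha_nonneg hp0 hp1
    have hα1 : max p (1 - p) ≤ 1 := alpha_le_one hp0 hp1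
    have heq : m - (n + 1) + 1 = m - n := by omega
    have hins : Finset.Icc (m - n) m = insert (m - n) (Finset.Icc (m - n + 1) m) := by
      ext x
      simp only [Finset.mem_Icc, Finset.mem_insert]
      omega
    rw [heq, hins, Finset.prod_insert (by simp only [Finset.mem_Icc]; omega)]
    have hc : 0 ≤ 1 - (max p (1 - p)) ^ (m - n) := by
      have := pow_le_one₀ hα0 hα1 (n := m - n)
      linarith
    calc Q p m (n + 1) ≥ Q p m n * (1 - (max p (1 - p)) ^ (m - n)) := Q_succ p hp0 hp1 m n
      _ ≥ (∏ ℓ ∈ Finset.Icc (m - n + 1) m, (1 - (max p (1 - p)) ^ ℓ))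
            * (1 - (max p (1 - p)) ^ (m - n)) := by
          exact mul_le_mul_of_nonneg_right (ih hn) hc
      _ = (1 - (max p (1 - p)) ^ (m - n))
            * ∏ ℓ ∈ Finset.Icc (m - n + 1) m, (1 - (max p (1 - p)) ^ ℓ) := mul_comm _ _

end Stmt7

/-- key intermediate bound in the proof of Lemma 4. The entries of the
random `m × k` matrix over `GF(2)` are independent, each equal to `1` with
probability `p`; with `α = max(p, 1-p)`, the matrix has rank `k` over `GF(2)` with
probability at least `∏_{ℓ = m-k+1}^{m} (1 - α^ℓ)`. -/
theorem stmt_7 (m k : ℕ) (hk : 1 ≤ k) (hmk : k ≤ m)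
    (p : ℝ) (hp0 : 0 < p) (hp1 : p < 1) :
    (∑ B : Fin m → Fin k → ZMod 2,
        if (Matrix.of (fun i j => B i j) : Matrix (Fin m) (Fin k) (ZMod 2)).rank = k then
          ∏ i : Fin m, ∏ j : Fin k, (if B i j = 1 then p else 1 - p)
        else 0)
      ≥ ∏ ℓ ∈ Finset.Icc (m - k + 1) m, (1 - (max p (1 - p)) ^ ℓ) := by
  have hmain : (∑ B : Fin m → Fin k → ZMod 2,
        if (Matrix.of (fun i j => B i j) : Matrix (Fin m) (Fin k) (ZMod 2)).rank = k then
          ∏ i : Fin m, ∏ j : Fin k, (if B i j = 1 then p else 1 - p)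
        else 0) = Stmt7.Q p m k := by
    rw [Stmt7.Q]
    rw [← Equiv.sum_comp (show (Fin m → Fin k → ZMod 2) ≃ (Fin k → Fin m → ZMod 2) from
      ⟨Function.swap, Function.swap, fun _ => rfl, fun _ => rfl⟩)]
    apply Finset.sum_congr rfl
    intro B _
    show _ = if LinearIndependent (ZMod 2) (Function.swap B) then
        ∏ j : Fin k, ∏ i : Fin m, Stmt7.w p (Function.swap B j i) else 0
    have hrk : (Matrix.of (fun i j => B i j) : Matrix (Fin m) (Fin k) (ZMod 2)).rank = k
        ↔ LinearIndependent (ZMod 2) (Function.swap B) := by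
      rw [Matrix.rank_eq_finrank_span_cols, linearIndependent_iff_card_eq_finrank_span,
        Fintype.card_fin, Set.finrank]
      constructor
      · intro h; exact h.symm
      · intro h; exact h.symm
    by_cases hcond : (Matrix.of (fun i j => B i j) : Matrix (Fin m) (Fin k) (ZMod 2)).rank = k
    · rw [if_pos hcond, if_pos (hrk.mp hcond), Finset.prod_comm]
      rfl
    · rw [if_neg hcond, if_neg (fun h => hcond (hrk.mpr h))]
  rw [hmain]
  exact Stmt7.Q_ge p hp0 hp1 m k hmk
end

section
/- Let k, Δ, ℓ be natural numbers with ℓ ≤ Δ and 3Δ ≤ k, and let 0 ≤ q ≤ 1. Fix binary vectors a, b of length k, each with exactly Δ ones, with inner product ⟨a,b⟩ = ℓ. Let r be drawn uniformly at random from the set of length-k binary vectors with exactly Δ ones, and let W₁, W₂ be Bernoulli(q) random variables, with r, W₁, W₂ mutually independent. Define Y₁ = 𝟙[⟨a,r⟩ > 0] XOR W₁ and Y₂ = 𝟙[⟨b,r⟩ > 0] XOR W₂. Then P(Y₁ = 1 and Y₂ = 1) = (1−q)² − 2(1−2q)(1−q)·C(k−Δ,Δ)/C(k,Δ) + (1−2q)²·C(k−2Δ+ℓ,Δ)/C(k,Δ).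 -/
open Finset

lemma count_fun {k : ℕ} (P : Finset (Fin k) → Prop) [DecidablePred P] :
    (univ.filter (fun r : Fin k → Bool => P (univ.filter (fun j => r j = true)))).card
      = (univ.filter P).card := by
  apply Finset.card_bij (fun r _ => univ.filter (fun j => r j = true))
  · intro r hr
    simp only [mem_filter, mem_univ, true_and] at hr ⊢
    exact hr
  · intro r₁ _ r₂ _ h
    funext j
    have := Finset.ext_iff.mp h j
    simp only [mem_filter, mem_univ, true_and] at this
    exact Bool.coe_iff_coe.mp this
  · intro s hs
    simp only [mem_filter, mem_univ, true_and] at hs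
    refine ⟨fun j => decide (j ∈ s), ?_, ?_⟩
    · have h : (univ.filter (fun j => decide (j ∈ s) = true)) = s := by
        ext j; simp
      simp only [mem_filter, mem_univ, true_and, h]
      exact hs
    · ext j; simp

lemma count_subset {k Δ : ℕ} (T : Finset (Fin k)) :
    (univ.filter (fun r : Fin k → Bool =>
        (univ.filter (fun j => r j = true)).card = Δ ∧
        (univ.filter (fun j => r j = true)) ⊆ T)).card
      = T.card.choose Δ := by
  rw [count_fun (fun s => s.card = Δ ∧ s ⊆ T)]
  have h : univ.filter (fun s : Finset (Fin k) => s.card = Δ ∧ s ⊆ T)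
      = powersetCard Δ T := by
    ext s; simp [mem_powersetCard, and_comm]
  rw [h, card_powersetCard]


/-- single-trial success probability for the triangle-count statistic
(uniform ensemble, quantized noisy responses). `r` is uniform over the weight-`Δ`
binary vectors of length `k` (there are `C(k,Δ)` of them, whence the normalization),
`W₁, W₂` are independent Bernoulli(q), and
`Y_t = 𝟙[⟨·, r⟩ > 0] XOR W_t`. -/
theorem stmt_12 (k Δ ℓ : ℕ) (hℓ : ℓ ≤ Δ) (hk : 3 * Δ ≤ k)
    (q : ℝ) (hq0 : 0 ≤ q) (hq1 : q ≤ 1)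
    (a b : Fin k → Bool)
    (ha : (univ.filter (fun j => a j = true)).card = Δ)
    (hb : (univ.filter (fun j => b j = true)).card = Δ)
    (hab : (univ.filter (fun j => a j = true ∧ b j = true)).card = ℓ) :
    (∑ r : Fin k → Bool, ∑ w₁ : Bool, ∑ w₂ : Bool,
        if (univ.filter (fun j => r j = true)).card = Δ ∧
            xor (decide (∃ j, a j = true ∧ r j = true)) w₁ = true ∧
            xor (decide (∃ j, b j = true ∧ r j = true)) w₂ = true then
          (if w₁ then q else 1 - q) * (if w₂ then q else 1 - q)
        else 0) / (k.choose Δ : ℝ)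
      = (1 - q) ^ 2
        - 2 * (1 - 2 * q) * (1 - q) * (((k - Δ).choose Δ : ℝ) / (k.choose Δ : ℝ))
        + (1 - 2 * q) ^ 2 * (((k + ℓ - 2 * Δ).choose Δ : ℝ) / (k.choose Δ : ℝ)) := by
  classical
  have hΔk : Δ ≤ k := by omega
  set A : Finset (Fin k) := univ.filter (fun j => a j = true) with hA
  set B : Finset (Fin k) := univ.filter (fun j => b j = true) with hB
  -- step 1: collapse the inner Bernoulli sums
  have key : ∀ r : Fin k → Bool,
      (∑ w₁ : Bool, ∑ w₂ : Bool,
        if (univ.filter (fun j => r j = true)).card = Δ ∧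
            xor (decide (∃ j, a j = true ∧ r j = true)) w₁ = true ∧
            xor (decide (∃ j, b j = true ∧ r j = true)) w₂ = true then
          (if w₁ then q else 1 - q) * (if w₂ then q else 1 - q)
        else 0)
      = ((if (univ.filter (fun j => r j = true)).card = Δ then ((1-q)^2 : ℝ) else 0)
        - (if (univ.filter (fun j => r j = true)).card = Δ ∧
              (univ.filter (fun j => r j = true)) ⊆ Aᶜ then ((1-2*q)*(1-q) : ℝ) else 0)
        - (if (univ.filter (fun j => r j = true)).card = Δ ∧
              (univ.filter (fun j => r j = true)) ⊆ Bᶜ then ((1-2*q)*(1-q) : ℝ) else 0))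
        + (if (univ.filter (fun j => r j = true)).card = Δ ∧
              (univ.filter (fun j => r j = true)) ⊆ Aᶜ ∩ Bᶜ then ((1-2*q)^2 : ℝ) else 0) := by
    intro r
    have hsubA : ((univ.filter (fun j => r j = true)) ⊆ Aᶜ) ↔ ¬(∃ j, a j = true ∧ r j = true) := by
      simp only [hA, Finset.subset_iff, mem_filter, mem_univ, true_and, mem_compl,
        not_exists, not_and]
      constructor
      · intro h j haj hrj; exact h hrj haj
      · intro h j hrj haj; exact h j haj hrj
    have hsubB : ((univ.filter (fun j => r j = true)) ⊆ Bᶜ) ↔ ¬(∃ j, b j = true ∧ r j = true) := by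
      simp only [hB, Finset.subset_iff, mem_filter, mem_univ, true_and, mem_compl,
        not_exists, not_and]
      constructor
      · intro h j haj hrj; exact h hrj haj
      · intro h j hrj haj; exact h j haj hrj
    have hsubAB : ((univ.filter (fun j => r j = true)) ⊆ Aᶜ ∩ Bᶜ) ↔
        ((univ.filter (fun j => r j = true)) ⊆ Aᶜ ∧ (univ.filter (fun j => r j = true)) ⊆ Bᶜ) :=
      Finset.subset_inter_iff
    by_cases hc : (univ.filter (fun j => r j = true)).card = Δ <;>
      by_cases hEA : ∃ j, a j = true ∧ r j = true <;>
      by_cases hEB : ∃ j, b j = true ∧ r j = true <;>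
      simp [Fintype.sum_bool, hc, hEA, hEB, hsubA, hsubB, hsubAB] <;> ring
  -- step 3: the four cardinalities
  have c0 : (univ.filter (fun r : Fin k → Bool =>
      (univ.filter (fun j => r j = true)).card = Δ)).card = k.choose Δ := by
    have := count_subset (k := k) (Δ := Δ) (univ : Finset (Fin k))
    simp only [Finset.subset_univ, and_true] at this
    rw [this, card_univ, Fintype.card_fin]
  have hcardA : (Aᶜ).card = k - Δ := by
    rw [Finset.card_compl, ha, Fintype.card_fin]
  have hcardB : (Bᶜ).card = k - Δ := by
    rw [Finset.card_compl, hb, Fintype.card_fin]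
  have hAB : (A ∩ B).card = ℓ := by
    rw [hA, hB, ← Finset.filter_and]; exact hab
  have hcardAB : (Aᶜ ∩ Bᶜ).card = k + ℓ - 2 * Δ := by
    rw [← Finset.compl_union, Finset.card_compl, Fintype.card_fin]
    have hu : (A ∪ B).card = 2 * Δ - ℓ := by
      have := Finset.card_union_add_card_inter A B
      rw [hAB, ha, hb] at this
      clear * - this hℓ
      omega
    clear * - hu hℓ hk
    omega
  have cA := count_subset (k := k) (Δ := Δ) (Aᶜ)
  have cB := count_subset (k := k) (Δ := Δ) (Bᶜ)
  have cAB := count_subset (k := k) (Δ := Δ) (Aᶜ ∩ Bᶜ)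
  rw [hcardA] at cA
  rw [hcardB] at cB
  rw [hcardAB] at cAB
  rw [Finset.sum_congr rfl (fun r _ => key r)]
  rw [Finset.sum_add_distrib, Finset.sum_sub_distrib, Finset.sum_sub_distrib]
  -- step 2: each indicator sum is card * constant
  have hsum : ∀ (P : (Fin k → Bool) → Prop) [DecidablePred P] (c : ℝ),
      (∑ r : Fin k → Bool, if P r then c else 0) = ((univ.filter P).card : ℝ) * c := by
    intro P _ c
    rw [← Finset.sum_filter, Finset.sum_const, nsmul_eq_mul]
  rw [hsum (fun r : Fin k → Bool => (univ.filter (fun j => r j = true)).card = Δ) ((1-q)^2),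
      hsum (fun r : Fin k → Bool => (univ.filter (fun j => r j = true)).card = Δ ∧
        (univ.filter (fun j => r j = true)) ⊆ Aᶜ) ((1-2*q)*(1-q)),
      hsum (fun r : Fin k → Bool => (univ.filter (fun j => r j = true)).card = Δ ∧
        (univ.filter (fun j => r j = true)) ⊆ Bᶜ) ((1-2*q)*(1-q)),
      hsum (fun r : Fin k → Bool => (univ.filter (fun j => r j = true)).card = Δ ∧
        (univ.filter (fun j => r j = true)) ⊆ Aᶜ ∩ Bᶜ) ((1-2*q)^2)]
  rw [c0, cA, cB, cAB]
  -- step 4: arithmetic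
  have hNpos : 0 < (k.choose Δ : ℝ) := by
    exact_mod_cast Nat.choose_pos hΔk
  field_simp
  ring
end

section
/- Let k ≥ 3 and let N_1, …, N_k be subsets of an n-element ground set such that every element belongs to at least one and at most two of the N_i, and such that for every three pairwise distinct indices p, q, r, the set N_p \ (N_q ∪ N_r) is nonempty. Then each cluster N_i is maximal: for every i and every element x ∉ N_i, there exists y ∈ N_i such that no cluster N_j contains both x and y. -/
open Finset

/-- Lemma (lem:maximal). Under the `Δ = 2` hypotheses, every cluster is
maximal: any element outside cluster `N i` tests negative with some element of
`N i`. -/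
theorem stmt_17 (n k : ℕ) (hk : 3 ≤ k)
    (N : Fin k → Finset (Fin n))
    (hN1 : ∀ x : Fin n, 1 ≤ (univ.filter (fun i => x ∈ N i)).card)
    (hN2 : ∀ x : Fin n, (univ.filter (fun i => x ∈ N i)).card ≤ 2)
    (hNtriple : ∀ p q r : Fin k, p ≠ q → p ≠ r → q ≠ r →
      ∃ x : Fin n, x ∈ N p ∧ x ∉ N q ∧ x ∉ N r) :
    ∀ i : Fin k, ∀ x : Fin n, x ∉ N i →
      ∃ y ∈ N i, ∀ j : Fin k, ¬(x ∈ N j ∧ y ∈ N j) := by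
  intro i x hx
  set S := univ.filter (fun j => x ∈ N j) with hS
  have hiS : i ∉ S := by simp [hS, hx]
  obtain ⟨q, hq⟩ := card_pos.mp (hN1 x)
  have hiq : i ≠ q := fun h => hiS (h ▸ hq)
  by_cases h : (S.erase q).Nonempty
  · obtain ⟨r, hr⟩ := h
    have hrq : r ≠ q := (mem_erase.mp hr).1
    have hrS : r ∈ S := (mem_erase.mp hr).2
    have hir : i ≠ r := fun h => hiS (h ▸ hrS)
    obtain ⟨y, hy, hyq, hyr⟩ := hNtriple i q r hiq hir (Ne.symm hrq)
    refine ⟨y, hy, ?_⟩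
    rintro j ⟨hxj, hyj⟩
    have hjS : j ∈ S := by simp [hS, hxj]
    have hsub : ({q, r} : Finset (Fin k)) ⊆ S := by
      intro z hz
      rcases mem_insert.mp hz with h1 | h1
      · exact h1 ▸ hq
      · exact (mem_singleton.mp h1) ▸ hrS
    have hcard : ({q, r} : Finset (Fin k)).card = 2 := by
      rw [card_insert_of_notMem (by simp [Ne.symm hrq]), card_singleton]
    have hEq : S = ({q, r} : Finset (Fin k)) :=
      (Finset.eq_of_subset_of_card_le hsub (by rw [hcard]; exact hN2 x)).symm
    rw [hEq] at hjS
    rcases mem_insert.mp hjS with h1 | h1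
    · exact hyq (h1 ▸ hyj)
    · exact hyr ((mem_singleton.mp h1) ▸ hyj)
  · have hSq : S = {q} := by
      apply Finset.eq_singleton_iff_unique_mem.mpr
      refine ⟨hq, fun z hz => ?_⟩
      by_contra hzq
      exact h ⟨z, mem_erase.mpr ⟨hzq, hz⟩⟩
    have : ({i, q} : Finset (Fin k)).card < Fintype.card (Fin k) := by
      calc ({i, q} : Finset (Fin k)).card ≤ 2 := card_insert_le _ _ |>.trans (by simp)
        _ < k := by omega
        _ = Fintype.card (Fin k) := (Fintype.card_fin k).symm
    have hss : ({i, q} : Finset (Fin k)) ⊂ univ :=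
      Finset.ssubset_univ_iff.mpr (fun hEq => by rw [hEq] at this; simp at this)
    obtain ⟨r, hr⟩ := Finset.exists_of_ssubset hss
    have hri : r ≠ i := fun h' => hr.2 (by simp [h'])
    have hrq : r ≠ q := fun h' => hr.2 (by simp [h'])
    obtain ⟨y, hy, hyq, hyr⟩ := hNtriple i q r hiq (Ne.symm hri) (Ne.symm hrq)
    refine ⟨y, hy, ?_⟩
    rintro j ⟨hxj, hyj⟩
    have hjS : j ∈ S := by simp [hS, hxj]
    rw [hSq, mem_singleton] at hjS
    exact hyq (hjS ▸ hyj)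
end

section
/- Let N_1, …, N_k be subsets of an n-element ground set such that for every i the set N_i \ (⋃_{j ≠ i} N_j) is nonempty. Let Ñ_1, …, Ñ_k be any subsets of the same ground set such that for all elements u, v: (there exists i with u ∈ N_i and v ∈ N_i) if and only if (there exists i with u ∈ Ñ_i and v ∈ Ñ_i). Then there is a permutation π of {1,…,k} such that Ñ_{π(i)} = N_i for every i. -/
open Finset

/-- Theorem (thm:DeltaBigger2). If every cluster `N i` has an element
belonging exclusively to it, then any family of clusters inducing the same
same-cluster query answers (including diagonal pairs) is a permutation of the ground
truth. -/
theorem stmt_18 (n k : ℕ)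
    (N M : Fin k → Finset (Fin n))
    (hex : ∀ i : Fin k, ∃ x : Fin n, x ∈ N i ∧ ∀ j : Fin k, j ≠ i → x ∉ N j)
    (hquery : ∀ u v : Fin n,
      (∃ i, u ∈ N i ∧ v ∈ N i) ↔ (∃ i, u ∈ M i ∧ v ∈ M i)) :
    ∃ π : Equiv.Perm (Fin k), ∀ i, M (π i) = N i := by
  classical
  choose x hxN hxu using hex
  -- key: any M-cluster containing x i is contained in N i
  have key : ∀ i j, x i ∈ M j → M j ⊆ N i := by
    intro i j hxj u hu
    obtain ⟨l, hul, hxl⟩ := (hquery u (x i)).mpr ⟨j, hu, hxj⟩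
    by_cases hl : l = i
    · exact hl ▸ hul
    · exact absurd hxl (hxu i l hl)
  set S : Fin k → Finset (Fin k) := fun i => univ.filter (fun j => x i ∈ M j) with hS
  have hSne : ∀ i, (S i).Nonempty := by
    intro i
    obtain ⟨j, hj, -⟩ := (hquery (x i) (x i)).mp ⟨i, hxN i, hxN i⟩
    exact ⟨j, by simp [hS, hj]⟩
  have hSdisj : ∀ i i', i ≠ i' → Disjoint (S i) (S i') := by
    intro i i' hne
    rw [Finset.disjoint_left]
    intro j hj hj'
    simp only [hS, mem_filter] at hj hj'
    exact hxu i' i hne (key i j hj.2 hj'.2)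
  -- counting: each S i is a singleton
  have hsum : ∑ i : Fin k, (S i).card ≤ k := by
    have h1 : (univ.biUnion S).card = ∑ i : Fin k, (S i).card :=
      Finset.card_biUnion (fun i _ j _ hij => hSdisj i j hij)
    have h2 : (univ.biUnion S).card ≤ k := le_trans (Finset.card_le_univ _) (by simp)
    omega
  have hsum1 : ∑ i : Fin k, (S i).card ≥ ∑ i : Fin k, 1 :=
    Finset.sum_le_sum (fun i _ => (hSne i).card_pos)
  simp only [Finset.sum_const, card_univ, Fintype.card_fin, smul_eq_mul, mul_one] at hsum1
  have hcardone : ∀ i, (S i).card = 1 := by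
    intro i
    by_contra h
    have h2 : 2 ≤ (S i).card := by
      have := (hSne i).card_pos; omega
    have : k + 1 ≤ ∑ j : Fin k, (S j).card := by
      calc k + 1 = (∑ j : Fin k, 1) + 1 := by simp
        _ ≤ (∑ j ∈ univ.erase i, (S j).card) + (S i).card := by
            rw [← Finset.sum_erase_add _ _ (mem_univ i)] at hsum1 ⊢
            have : ∑ j ∈ univ.erase i, 1 ≤ ∑ j ∈ univ.erase i, (S j).card :=
              Finset.sum_le_sum (fun j _ => (hSne j).card_pos)
            simp only [Finset.sum_const, smul_eq_mul, mul_one] at this ⊢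
            omega
        _ = ∑ j : Fin k, (S j).card := Finset.sum_erase_add _ _ (mem_univ i)
    omega
  choose π0 hπ0 using fun i => Finset.card_eq_one.mp (hcardone i)
  have hmem : ∀ i, x i ∈ M (π0 i) := by
    intro i
    have : π0 i ∈ S i := by rw [hπ0 i]; exact mem_singleton_self _
    simpa [hS] using this
  have hinj : Function.Injective π0 := by
    intro i i' h
    by_contra hne
    have h1 : π0 i ∈ S i := by rw [hπ0 i]; exact mem_singleton_self _
    have h2 : π0 i ∈ S i' := by rw [h, hπ0 i']; exact mem_singleton_self _
    exact (Finset.disjoint_left.mp (hSdisj i i' hne) h1) h2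
  refine ⟨Equiv.ofBijective π0 (Finite.injective_iff_bijective.mp hinj), fun i => ?_⟩
  simp only [Equiv.ofBijective_apply]
  apply Finset.Subset.antisymm
  · exact key i (π0 i) (hmem i)
  · intro v hv
    obtain ⟨j, hvj, hxj⟩ := (hquery v (x i)).mp ⟨i, hv, hxN i⟩
    have : j ∈ S i := by simp [hS, hxj]
    rw [hπ0 i, mem_singleton] at this
    exact this ▸ hvj
end
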